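/- arXiv:2605.28711 — 3 statements merged into one kernel-verified Lean document; each statement's English description precedes it below -/
import Mathlib

section
/- Let p be a μ-strongly log-concave probability density on ℝ^n with finite second moment, global maximizer (mode) x* and mean m = ∫ x p(x) dx. Then ‖x* − m‖² ≤ (n/μ)·(sup_x p(x))·(2π/μ)^{n/2}. In particular, if (sup_x p(x))·(2π/μ)^{n/2} ≤ 1, then ‖x* − m‖² ≤ n/μ. -/
open MeasureTheory Set Real
open Filter Topology


lemma rpow_two' (x : ℝ) : x ^ (2:ℝ) = x ^ 2 := by
  rw [show (2:ℝ) = ((2:ℕ):ℝ) by norm_num, Real.rpow_natCast]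

lemma integrable_sq_mul_exp_neg_mul_sq {b : ℝ} (hb : 0 < b) :
    Integrable (fun x : ℝ => x ^ 2 * rexp (-b * x ^ 2)) := by
  have h := integrable_rpow_mul_exp_neg_mul_sq hb (s := 2) (by norm_num)
  simpa [rpow_two'] using h

lemma integral_sq_mul_exp_neg_mul_sq {b : ℝ} (hb : 0 < b) :
    ∫ x : ℝ, x ^ 2 * rexp (-b * x ^ 2) = √(π / b) / (2 * b) := by
  have hderiv : ∀ x : ℝ, HasDerivAt (fun x : ℝ => x * rexp (-b * x ^ 2))
      (rexp (-b * x ^ 2) - (2 * b) * (x ^ 2 * rexp (-b * x ^ 2))) x := by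
    intro x
    have h1 : HasDerivAt (fun x : ℝ => -b * x ^ 2) (-b * (2 * x)) x := by
      simpa using ((hasDerivAt_pow 2 x).const_mul (-b))
    have h2 := (h1.exp).const_mul x  -- no, need product rule
    have h3 : HasDerivAt (fun x : ℝ => x * rexp (-b * x ^ 2))
        (1 * rexp (-b * x ^ 2) + x * (rexp (-b * x ^ 2) * (-b * (2 * x)))) x :=
      (hasDerivAt_id x).mul h1.exp
    convert h3 using 1
    ring
  have hint' : Integrable (fun x : ℝ => rexp (-b * x ^ 2) - (2 * b) * (x ^ 2 * rexp (-b * x ^ 2))) :=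
    (integrable_exp_neg_mul_sq hb).sub ((integrable_sq_mul_exp_neg_mul_sq hb).const_mul _)
  have hkey := integral_eq_zero_of_hasDerivAt_of_integrable hderiv hint'
    (integrable_mul_exp_neg_mul_sq hb)
  rw [integral_sub (integrable_exp_neg_mul_sq hb)
    ((integrable_sq_mul_exp_neg_mul_sq hb).const_mul _), MeasureTheory.integral_const_mul,
    integral_gaussian] at hkey
  have h2b : (2*b) ≠ 0 := by positivity
  field_simp at hkey ⊢
  linarith



section pi
variable {n : ℕ} {b : ℝ}

/-- factor functions -/
noncomputable def gfun (b : ℝ) (i j : Fin n) : ℝ → ℝ :=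
  fun t => (if j = i then t ^ 2 else 1) * rexp (-b * t ^ 2)

lemma gfun_integrable (hb : 0 < b) (i j : Fin n) : Integrable (gfun b i j) := by
  unfold gfun
  by_cases h : j = i
  · simp only [h, if_true]
    exact integrable_sq_mul_exp_neg_mul_sq hb
  · simp only [h, if_false, one_mul]
    exact integrable_exp_neg_mul_sq hb

lemma prod_gfun_eq (i : Fin n) (x : Fin n → ℝ) :
    (∏ j, gfun b i j (x j)) = x i ^ 2 * rexp (-b * ∑ j, x j ^ 2) := by
  unfold gfun
  rw [Finset.prod_mul_distrib, Finset.prod_ite_eq', if_pos (Finset.mem_univ i),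
    ← Real.exp_sum]
  congr 1
  rw [Finset.mul_sum]

lemma pi_term_integrable (hb : 0 < b) (i : Fin n) :
    Integrable (fun x : Fin n → ℝ => x i ^ 2 * rexp (-b * ∑ j, x j ^ 2)) := by
  have := Integrable.fintype_prod (f := gfun b i) (fun j => gfun_integrable hb i j)
  simpa only [prod_gfun_eq, volume_pi] using this

lemma pi_moment (hb : 0 < b) :
    ∫ x : Fin n → ℝ, (∑ i, x i ^ 2) * rexp (-b * ∑ j, x j ^ 2)
      = n * ((√(π / b) / (2 * b)) * √(π / b) ^ (n - 1)) := by
  have h1 : ∀ x : Fin n → ℝ, (∑ i, x i ^ 2) * rexp (-b * ∑ j, x j ^ 2)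
      = ∑ i, x i ^ 2 * rexp (-b * ∑ j, x j ^ 2) := fun x => Finset.sum_mul ..
  simp_rw [h1]
  rw [integral_finset_sum _ (fun i _ => pi_term_integrable hb i)]
  have h2 : ∀ i : Fin n, ∫ x : Fin n → ℝ, x i ^ 2 * rexp (-b * ∑ j, x j ^ 2)
      = (√(π / b) / (2 * b)) * √(π / b) ^ (n - 1) := by
    intro i
    simp_rw [← prod_gfun_eq i]
    rw [integral_fintype_prod_volume_eq_prod (gfun b i)]
    have h3 : ∀ j, ∫ t : ℝ, gfun b i j t = if j = i then √(π / b) / (2 * b) else √(π / b) := by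
      intro j
      unfold gfun
      by_cases h : j = i
      · simp only [h, if_true]
        exact integral_sq_mul_exp_neg_mul_sq hb
      · simp only [h, if_false, one_mul]
        exact integral_gaussian b
    simp_rw [h3]
    rw [← Finset.mul_prod_erase Finset.univ _ (Finset.mem_univ i), if_pos rfl]
    congr 1
    rw [Finset.prod_congr rfl (fun j hj => if_neg (Finset.ne_of_mem_erase hj)),
      Finset.prod_const, Finset.card_erase_of_mem (Finset.mem_univ i), Finset.card_univ,
      Fintype.card_fin]
  simp_rw [h2]
  rw [Finset.sum_const, Finset.card_univ, Fintype.card_fin, nsmul_eq_mul]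

end pi


lemma euclid_norm_symm {n : ℕ} (x : Fin n → ℝ) :
    ‖(MeasurableEquiv.toLp 2 (Fin n → ℝ)).symm.symm x‖ ^ 2 = ∑ i, x i ^ 2 := by
  simp only [MeasurableEquiv.symm_symm, MeasurableEquiv.toLp_apply,
    EuclideanSpace.norm_eq, PiLp.toLp_apply, Real.norm_eq_abs, sq_abs]
  rw [sq_sqrt (Finset.sum_nonneg fun i _ => sq_nonneg _)]

lemma moment_algebra {n : ℕ} {b : ℝ} (hb : 0 < b) :
    (n : ℝ) * ((√(π / b) / (2 * b)) * √(π / b) ^ (n - 1))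
      = ((n : ℝ) / (2 * b)) * (π / b) ^ ((n : ℝ) / 2) := by
  rcases Nat.eq_zero_or_pos n with hn | hn
  · subst hn; simp
  have hpb : 0 < π / b := div_pos pi_pos hb
  rw [sqrt_eq_rpow, ← Real.rpow_natCast ((π / b) ^ (1 / (2:ℝ))) (n - 1),
    ← Real.rpow_mul hpb.le]
  have : (1 / (2:ℝ)) * ((n - 1 : ℕ) : ℝ) = (n : ℝ) / 2 - 1 / 2 := by
    rw [Nat.cast_sub hn]
    push_cast
    ring
  rw [this]
  rw [div_mul_eq_mul_div, div_mul_eq_mul_div, ← Real.rpow_add hpb]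
  rw [show (1 / (2:ℝ)) + ((n:ℝ)/2 - 1/2) = (n:ℝ)/2 by ring]
  ring

lemma euclid_moment {n : ℕ} {b : ℝ} (hb : 0 < b) :
    ∫ v : EuclideanSpace ℝ (Fin n), ‖v‖ ^ 2 * rexp (-b * ‖v‖ ^ 2)
      = ((n : ℝ) / (2 * b)) * (π / b) ^ ((n : ℝ) / 2) := by
  have hmp := (EuclideanSpace.volume_preserving_symm_measurableEquiv_toLp (Fin n)).symm
  rw [← hmp.integral_comp (MeasurableEquiv.measurableEmbedding _)]
  simp only [Function.comp_def, euclid_norm_symm]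
  rw [pi_moment hb, moment_algebra hb]

lemma euclid_integrable_exp {n : ℕ} {c : ℝ} (hc : 0 < c) :
    Integrable (fun v : EuclideanSpace ℝ (Fin n) => rexp (-c * ‖v‖ ^ 2)) := by
  have h := (GaussianFourier.integrable_cexp_neg_mul_sq_norm_add
      (V := EuclideanSpace ℝ (Fin n)) (b := (c : ℂ)) (by simpa using hc) 0 0).norm
  refine h.congr ?_
  filter_upwards with v
  rw [Complex.norm_exp]
  congr 1
  have : ((-c : ℂ) * (‖v‖:ℂ) ^ 2 + 0 * ((inner ℝ (0 : EuclideanSpace ℝ (Fin n)) v : ℝ) : ℂ))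
      = ((-c * ‖v‖ ^ 2 : ℝ) : ℂ) := by push_cast; ring
  rw [this, Complex.ofReal_re]

lemma euclid_integrable_moment {n : ℕ} {b : ℝ} (hb : 0 < b) :
    Integrable (fun v : EuclideanSpace ℝ (Fin n) => ‖v‖ ^ 2 * rexp (-b * ‖v‖ ^ 2)) := by
  have hb2 : 0 < b / 2 := by positivity
  refine Integrable.mono' ((euclid_integrable_exp hb2).const_mul (2 / b)) ?_ ?_
  · exact (continuous_norm.pow 2).mul
      ((continuous_const.mul (continuous_norm.pow 2)).rexp) |>.aestronglyMeasurable
  · filter_upwards with v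
    have h0 : (0:ℝ) ≤ ‖v‖ ^ 2 * rexp (-b * ‖v‖ ^ 2) := by positivity
    rw [Real.norm_of_nonneg h0]
    have key : ‖v‖ ^ 2 * rexp (-(b / 2) * ‖v‖ ^ 2) ≤ 2 / b := by
      have hu : (b / 2) * ‖v‖ ^ 2 ≤ rexp ((b / 2) * ‖v‖ ^ 2) := by
        have := Real.add_one_le_exp ((b / 2) * ‖v‖ ^ 2)
        nlinarith [Real.exp_pos ((b / 2) * ‖v‖ ^ 2)]
      rw [show -(b / 2) * ‖v‖ ^ 2 = -(b / 2 * ‖v‖ ^ 2) by ring, Real.exp_neg,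
        mul_inv_le_iff₀ (Real.exp_pos _)]
      calc ‖v‖ ^ 2 = (2 / b) * ((b / 2) * ‖v‖ ^ 2) := by field_simp
        _ ≤ (2 / b) * rexp ((b / 2) * ‖v‖ ^ 2) := by
            apply mul_le_mul_of_nonneg_left hu (by positivity)
    calc ‖v‖ ^ 2 * rexp (-b * ‖v‖ ^ 2)
        = (‖v‖ ^ 2 * rexp (-(b / 2) * ‖v‖ ^ 2)) * rexp (-(b / 2) * ‖v‖ ^ 2) := by
          rw [mul_assoc, ← Real.exp_add]; ring_nf
      _ ≤ (2 / b) * rexp (-(b / 2) * ‖v‖ ^ 2) := by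
          apply mul_le_mul_of_nonneg_right key (Real.exp_pos _).le


/-- A probability density `p` on `ℝⁿ` is `μc`-strongly log-concave if `-log p` is twice
continuously differentiable and `μc`-strongly convex. -/
def StronglyLogConcave {n : ℕ} (μc : ℝ) (p : EuclideanSpace ℝ (Fin n) → ℝ) : Prop :=
  ContDiff ℝ 2 (fun x => -Real.log (p x)) ∧
    StrongConvexOn Set.univ μc (fun x => -Real.log (p x))

set_option maxHeartbeats 1000000 in
/-- For a `μc`-strongly log-concave probability density on `ℝⁿ` with finite second moment,
mode `xs` and mean `m`, one has `‖xs − m‖² ≤ (n/μc)·(sup p)·(2π/μc)^{n/2}`; in particular,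
if `(sup p)·(2π/μc)^{n/2} ≤ 1` then `‖xs − m‖² ≤ n/μc`. -/
theorem mode_mean_dist_sq_le_of_stronglyLogConcave {n : ℕ} (μc : ℝ) (hμc : 0 < μc)
    (p : EuclideanSpace ℝ (Fin n) → ℝ) (hp : ∀ x, 0 ≤ p x)
    (hint : ∫ x, p x = 1)
    (hlc : StronglyLogConcave μc p)
    (hmom : Integrable (fun x => ‖x‖ ^ 2 * p x))
    (xs : EuclideanSpace ℝ (Fin n)) (hmode : ∀ x, p x ≤ p xs)
    (m : EuclideanSpace ℝ (Fin n)) (hm : m = ∫ x, p x • x) :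
    ‖xs - m‖ ^ 2 ≤ (n / μc) * (⨆ x, p x) * (2 * π / μc) ^ ((n : ℝ) / 2) ∧
      ((⨆ x, p x) * (2 * π / μc) ^ ((n : ℝ) / 2) ≤ 1 → ‖xs - m‖ ^ 2 ≤ n / μc) := by
  obtain ⟨hcd, hconv⟩ := hlc
  have hφc : Continuous fun x => -Real.log (p x) := hcd.continuous
  -- p is integrable
  have hpInt : Integrable p := by
    by_contra h
    rw [integral_undef h] at hint
    exact one_ne_zero hint.symm
  -- the mode has positive density
  have hpxs : 0 < p xs := by
    rcases (hp xs).lt_or_eq with h | h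
    · exact h
    · exfalso
      have hz : p = fun _ => (0 : ℝ) := funext fun x => le_antisymm (h ▸ hmode x) (hp x)
      rw [hz] at hint
      simp at hint
  -- dispose of the case n = 0
  rcases Nat.eq_zero_or_pos n with hn0 | hn0
  · subst hn0
    have hxm : xs = m := Subsingleton.elim xs m
    rw [hxm, sub_self, norm_zero]
    norm_num
  -- xs minimizes -log p
  have hmin : ∀ x, -Real.log (p xs) ≤ -Real.log (p x) := by
    intro x
    rcases (hp x).lt_or_eq with hx | hx
    · exact neg_le_neg (Real.log_le_log hx (hmode x))
    · rw [← hx, Real.log_zero, neg_zero]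
      by_contra hlt
      push_neg at hlt
      -- hlt : 0 < -log (p xs), so p xs < 1
      set U : Set (EuclideanSpace ℝ (Fin n)) := {y | -Real.log (p y) < -Real.log (p xs)} with hUdef
      have hUopen : IsOpen U := isOpen_lt hφc continuous_const
      have hxU : x ∈ U := by
        show -Real.log (p x) < -Real.log (p xs)
        rw [← hx, Real.log_zero, neg_zero]
        exact hlt
      have hU0 : ∀ y ∈ U, p y = 0 := by
        intro y hy
        rcases (hp y).lt_or_eq with hy' | hy'
        · exfalso
          have hlog : Real.log (p xs) < Real.log (p y) := by
            have : -Real.log (p y) < -Real.log (p xs) := hy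
            linarith
          have : p xs < p y := by
            calc p xs = rexp (Real.log (p xs)) := (Real.exp_log hpxs).symm
              _ < rexp (Real.log (p y)) := Real.exp_lt_exp.mpr hlog
              _ = p y := Real.exp_log hy'
          exact absurd (hmode y) (not_le.mpr this)
        · exact hy'.symm
      obtain ⟨ε, hε, hball⟩ := Metric.isOpen_iff.mp hUopen x hxU
      set u : EuclideanSpace ℝ (Fin n) := EuclideanSpace.single (⟨0, hn0⟩ : Fin n) (1 : ℝ) with hu
      have hunorm : ‖u‖ = 1 := by rw [hu, EuclideanSpace.norm_single]; norm_num
      set y : EuclideanSpace ℝ (Fin n) := x + (ε / 2) • u with hy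
      have hyU : y ∈ U := by
        apply hball
        rw [Metric.mem_ball, dist_eq_norm, hy]
        simp only [add_sub_cancel_left]
        rw [norm_smul, hunorm, Real.norm_of_nonneg (by positivity)]
        linarith
      have hmidU : (1 / 2 : ℝ) • x + (1 / 2 : ℝ) • y ∈ U := by
        apply hball
        rw [Metric.mem_ball, dist_eq_norm]
        have : (1 / 2 : ℝ) • x + (1 / 2 : ℝ) • y - x = (ε / 4) • u := by
          rw [hy]; module
        rw [this, norm_smul, hunorm, Real.norm_of_nonneg (by positivity)]
        linarith
      have hcx : -Real.log (p x) = 0 := by rw [hU0 x hxU, Real.log_zero, neg_zero]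
      have hcy : -Real.log (p y) = 0 := by rw [hU0 y hyU, Real.log_zero, neg_zero]
      have hcm : -Real.log (p ((1 / 2 : ℝ) • x + (1 / 2 : ℝ) • y)) = 0 := by
        rw [hU0 _ hmidU, Real.log_zero, neg_zero]
      have hineq := hconv.2 (Set.mem_univ x) (Set.mem_univ y)
        (by norm_num : (0:ℝ) ≤ 1/2) (by norm_num : (0:ℝ) ≤ 1/2) (by norm_num)
      simp only [smul_eq_mul] at hineq
      rw [hcm] at hineq
      have hxy : ‖x - y‖ = ε / 2 := by
        rw [hy]
        have : x - (x + (ε / 2) • u) = -((ε/2) • u) := by module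
        rw [this, norm_neg, norm_smul, hunorm, Real.norm_of_nonneg (by positivity), mul_one]
      rw [hxy] at hineq
      simp only [smul_eq_mul, hcx, hcy] at hineq
      nlinarith [mul_pos hμc (mul_pos hε hε)]
  -- quadratic growth at the minimum
  have hgrow : ∀ x, -Real.log (p xs) + μc / 2 * ‖x - xs‖ ^ 2 ≤ -Real.log (p x) := by
    intro x
    have key : ∀ t : ℝ, t ∈ Ioo (0:ℝ) 1 →
        -Real.log (p xs) + (1 - t) * (μc / 2 * ‖xs - x‖ ^ 2) ≤ -Real.log (p x) := by
      intro t ht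
      have h := hconv.2 (Set.mem_univ xs) (Set.mem_univ x)
        (by linarith [ht.2] : (0:ℝ) ≤ 1 - t) ht.1.le (by ring)
      have hmin' := hmin ((1 - t) • xs + t • x)
      simp only [smul_eq_mul] at h
      have h2 : 0 ≤ t * (-Real.log (p x) - -Real.log (p xs) - (1 - t) * (μc / 2 * ‖xs - x‖ ^ 2)) := by
        nlinarith [hmin', h]
      have h3 : 0 ≤ -Real.log (p x) - -Real.log (p xs) - (1 - t) * (μc / 2 * ‖xs - x‖ ^ 2) :=
        nonneg_of_mul_nonneg_right h2 ht.1
      linarith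
    have hev : ∀ᶠ t in 𝓝[>] (0:ℝ),
        -Real.log (p xs) + (1 - t) * (μc / 2 * ‖xs - x‖ ^ 2) ≤ -Real.log (p x) := by
      filter_upwards [Ioo_mem_nhdsGT_of_mem (Set.left_mem_Ico.mpr one_pos)] with t ht
      exact key t ht
    have hten : Tendsto (fun t : ℝ => -Real.log (p xs) + (1 - t) * (μc / 2 * ‖xs - x‖ ^ 2))
        (𝓝[>] (0:ℝ)) (𝓝 (-Real.log (p xs) + (1 - 0) * (μc / 2 * ‖xs - x‖ ^ 2))) := by
      apply Tendsto.mono_left _ nhdsWithin_le_nhds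
      exact (Continuous.tendsto (by continuity) 0)
    have := le_of_tendsto hten hev
    rw [norm_sub_rev x xs]
    linarith
  -- pointwise Gaussian bound on p
  have hbound : ∀ x, p x ≤ p xs * rexp (-(μc / 2) * ‖x - xs‖ ^ 2) := by
    intro x
    rcases (hp x).lt_or_eq with hx | hx
    · have h := hgrow x
      calc p x = rexp (Real.log (p x)) := (Real.exp_log hx).symm
        _ ≤ rexp (Real.log (p xs) - μc / 2 * ‖x - xs‖ ^ 2) := Real.exp_le_exp.mpr (by linarith)
        _ = p xs * rexp (-(μc / 2) * ‖x - xs‖ ^ 2) := by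
            rw [sub_eq_add_neg, Real.exp_add, Real.exp_log hpxs]
            ring_nf
    · rw [← hx]
      positivity
  -- supremum of p
  have hsup : (⨆ x, p x) = p xs :=
    le_antisymm (ciSup_le hmode) (le_ciSup ⟨p xs, by rintro r ⟨x, rfl⟩; exact hmode x⟩ xs)
  -- integrability
  have hmeas : AEStronglyMeasurable p volume := hpInt.aestronglyMeasurable
  have hc2 : Continuous fun x : EuclideanSpace ℝ (Fin n) => ‖x - xs‖ ^ 2 :=
    ((continuous_id.sub continuous_const).norm.pow 2)
  have hd2 : Integrable (fun x => p x * ‖x - xs‖ ^ 2) := by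
    refine Integrable.mono' ((hpInt.const_mul (2 * ‖xs‖ ^ 2)).add (hmom.const_mul 2))
      (hmeas.mul hc2.aestronglyMeasurable) ?_
    filter_upwards with x
    rw [Real.norm_of_nonneg (mul_nonneg (hp x) (sq_nonneg _))]
    have hn : ‖x - xs‖ ^ 2 ≤ 2 * ‖x‖ ^ 2 + 2 * ‖xs‖ ^ 2 := by
      have h1 := norm_sub_le x xs
      have h2 : ‖x - xs‖ ^ 2 ≤ (‖x‖ + ‖xs‖) ^ 2 := by
        apply pow_le_pow_left₀ (norm_nonneg _) h1
      nlinarith [sq_nonneg (‖x‖ - ‖xs‖)]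
    simp only [Pi.add_apply]
    nlinarith [hp x]
  have hd1 : Integrable (fun x => p x * ‖x - xs‖) := by
    refine Integrable.mono' (hpInt.add hd2)
      (hmeas.mul (continuous_id.sub continuous_const).norm.aestronglyMeasurable) ?_
    filter_upwards with x
    rw [Real.norm_of_nonneg (mul_nonneg (hp x) (norm_nonneg _))]
    have h1 : ‖x - xs‖ ≤ 1 + ‖x - xs‖ ^ 2 := by nlinarith [sq_nonneg (‖x - xs‖ - 1)]
    simp only [Pi.add_apply]
    nlinarith [hp x]
  have hsmulsub : Integrable (fun x => p x • (xs - x)) := by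
    refine Integrable.mono' hd1
      (hmeas.smul (continuous_const.sub continuous_id).aestronglyMeasurable) ?_
    filter_upwards with x
    rw [norm_smul, Real.norm_of_nonneg (hp x), norm_sub_rev]
  have hsmulx : Integrable (fun x => p x • x) := by
    have heq : (fun x : EuclideanSpace ℝ (Fin n) => p x • x)
        = fun x => p x • xs - p x • (xs - x) := funext fun x => by rw [smul_sub]; abel
    rw [heq]
    exact (hpInt.smul_const xs).sub hsmulsub
  -- mean identity
  have hxm : xs - m = ∫ x, p x • (xs - x) := by
    rw [hm]
    simp_rw [smul_sub]
    rw [integral_sub (hpInt.smul_const xs) hsmulx, integral_smul_const, hint, one_smul]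
  -- step 4: bound the norm by the first absolute moment
  have h4 : ‖xs - m‖ ≤ ∫ x, p x * ‖x - xs‖ := by
    rw [hxm]
    refine (norm_integral_le_integral_norm _).trans_eq ?_
    congr 1
    funext x
    rw [norm_smul, Real.norm_of_nonneg (hp x), norm_sub_rev]
  have hI1nn : 0 ≤ ∫ x, p x * ‖x - xs‖ :=
    integral_nonneg fun x => mul_nonneg (hp x) (norm_nonneg _)
  -- step 5: Cauchy-Schwarz / variance trick
  have h5 : (∫ x, p x * ‖x - xs‖) ^ 2 ≤ ∫ x, p x * ‖x - xs‖ ^ 2 := by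
    set I1 := ∫ x, p x * ‖x - xs‖ with hI1
    have hnn : 0 ≤ ∫ x, p x * (‖x - xs‖ - I1) ^ 2 :=
      integral_nonneg fun x => mul_nonneg (hp x) (sq_nonneg _)
    have hexp : (fun x => p x * (‖x - xs‖ - I1) ^ 2)
        = fun x => (p x * ‖x - xs‖ ^ 2 - (2 * I1) * (p x * ‖x - xs‖)) + I1 ^ 2 * p x :=
      funext fun x => by ring
    have hfi : Integrable (fun x => p x * ‖x - xs‖ ^ 2 - 2 * I1 * (p x * ‖x - xs‖)) := by
      exact hd2.sub (hd1.const_mul _)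
    have hgi : Integrable (fun x => I1 ^ 2 * p x) := by exact hpInt.const_mul _
    have hsi : Integrable (fun x => 2 * I1 * (p x * ‖x - xs‖)) := by exact hd1.const_mul _
    rw [hexp, integral_add hfi hgi, integral_sub hd2 hsi, integral_const_mul,
      integral_const_mul, hint] at hnn
    rw [← hI1] at hnn
    nlinarith [hnn]
  -- step 6: Gaussian moment bound
  have hb2 : 0 < μc / 2 := by positivity
  have h6 : (∫ x, p x * ‖x - xs‖ ^ 2) ≤ p xs * ((n / μc) * (2 * π / μc) ^ ((n : ℝ) / 2)) := by
    have hgint : Integrable (fun x : EuclideanSpace ℝ (Fin n) =>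
        p xs * (‖x - xs‖ ^ 2 * rexp (-(μc / 2) * ‖x - xs‖ ^ 2))) :=
      (((euclid_integrable_moment hb2).comp_sub_right xs).const_mul (p xs))
    have hle : (∫ x, p x * ‖x - xs‖ ^ 2)
        ≤ ∫ x, p xs * (‖x - xs‖ ^ 2 * rexp (-(μc / 2) * ‖x - xs‖ ^ 2)) := by
      refine integral_mono hd2 hgint fun x => ?_
      have := mul_le_mul_of_nonneg_right (hbound x) (sq_nonneg ‖x - xs‖)
      calc p x * ‖x - xs‖ ^ 2 ≤ p xs * rexp (-(μc / 2) * ‖x - xs‖ ^ 2) * ‖x - xs‖ ^ 2 := this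
        _ = p xs * (‖x - xs‖ ^ 2 * rexp (-(μc / 2) * ‖x - xs‖ ^ 2)) := by ring
    refine hle.trans ?_
    rw [integral_const_mul]
    apply mul_le_mul_of_nonneg_left _ hpxs.le
    rw [integral_sub_right_eq_self
      (fun v : EuclideanSpace ℝ (Fin n) => ‖v‖ ^ 2 * rexp (-(μc / 2) * ‖v‖ ^ 2)) xs]
    rw [euclid_moment hb2]
    have e1 : (n : ℝ) / (2 * (μc / 2)) = (n : ℝ) / μc := by ring_nf
    have e2 : π / (μc / 2) = 2 * π / μc := by ring
    rw [e1, e2]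
  -- assemble
  have hmain : ‖xs - m‖ ^ 2 ≤ p xs * ((n / μc) * (2 * π / μc) ^ ((n : ℝ) / 2)) := by
    calc ‖xs - m‖ ^ 2 ≤ (∫ x, p x * ‖x - xs‖) ^ 2 := by
          apply pow_le_pow_left₀ (norm_nonneg _) h4
      _ ≤ ∫ x, p x * ‖x - xs‖ ^ 2 := h5
      _ ≤ p xs * ((n / μc) * (2 * π / μc) ^ ((n : ℝ) / 2)) := h6
  constructor
  · rw [hsup]
    calc ‖xs - m‖ ^ 2 ≤ p xs * ((n / μc) * (2 * π / μc) ^ ((n : ℝ) / 2)) := hmain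
      _ = (n / μc) * p xs * (2 * π / μc) ^ ((n : ℝ) / 2) := by ring
  · intro hle
    rw [hsup] at hle
    have hnμ : 0 ≤ (n : ℝ) / μc := by positivity
    calc ‖xs - m‖ ^ 2 ≤ p xs * ((n / μc) * (2 * π / μc) ^ ((n : ℝ) / 2)) := hmain
      _ = (n / μc) * (p xs * (2 * π / μc) ^ ((n : ℝ) / 2)) := by ring
      _ ≤ (n / μc) * 1 := mul_le_mul_of_nonneg_left hle hnμ
      _ = n / μc := mul_one _
end

section
/- Let p be a μ-strongly log-concave probability density on ℝ^n with finite second moment, mode x* and mean m. If (sup_x p(x))·(2π/μ)^{n/2} ≤ 1, then the Wasserstein-2 distance between the point mass δ_{x*} and p satisfies W₂(δ_{x*}, p)² = ∫ ‖x − x*‖² p(x) dx ≤ 2n/μ. -/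
open MeasureTheory Set Real Filter Topology
open scoped NNReal ENNReal

/-- The squared Wasserstein-2 distance between two measures: the infimum over all couplings
(probability measures on the product with the given marginals) of the expected squared
distance. -/
noncomputable def W2sq {E : Type*} [NormedAddCommGroup E] [MeasurableSpace E]
    (μ ν : Measure E) : ℝ :=
  sInf {c : ℝ | ∃ pl : Measure (E × E), IsProbabilityMeasure pl ∧
    pl.map Prod.fst = μ ∧ pl.map Prod.snd = ν ∧ c = ∫ q, ‖q.1 - q.2‖ ^ 2 ∂pl}

/-- The Wasserstein-2 distance. -/
noncomputable def W2 {E : Type*} [NormedAddCommGroup E] [MeasurableSpace E]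
    (μ ν : Measure E) : ℝ :=
  Real.sqrt (W2sq μ ν)

-- 1D second moment
lemma moment1d {b : ℝ} (hb : 0 < b) :
    ∫ x : ℝ, x ^ 2 * exp (-b * x ^ 2) = 1 / (2 * b) * Real.sqrt (π / b) := by
  have hd : ∀ x : ℝ, HasDerivAt (fun x : ℝ => -(1 / (2 * b)) * (x * exp (-b * x ^ 2)))
      (x ^ 2 * exp (-b * x ^ 2) - 1 / (2 * b) * exp (-b * x ^ 2)) x := by
    intro x
    have h1 : HasDerivAt (fun x : ℝ => -b * x ^ 2) (-b * (2 * x)) x := by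
      simpa using ((hasDerivAt_pow 2 x).const_mul (-b))
    have h2 : HasDerivAt (fun x : ℝ => exp (-b * x ^ 2)) (exp (-b * x ^ 2) * (-b * (2*x))) x :=
      h1.exp
    have h3 := ((hasDerivAt_id x).mul h2).const_mul (-(1 / (2 * b)))
    refine h3.congr_deriv ?_
    simp only [id]; field_simp
    ring
  have hi2 : Integrable (fun x : ℝ => x ^ 2 * exp (-b * x ^ 2)) := by
    have := integrable_rpow_mul_exp_neg_mul_sq hb (s := 2) (by norm_num)
    simpa [Real.rpow_natCast] using this
  have hi0 : Integrable (fun x : ℝ => exp (-b * x ^ 2)) := integrable_exp_neg_mul_sq hb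
  have hlimT : Tendsto (fun x : ℝ => x * exp (-b * x ^ 2)) atTop (𝓝 0) := by
    have h := rpow_mul_exp_neg_mul_sq_isLittleO_exp_neg hb (1 : ℝ)
    have h2 : Tendsto (fun x : ℝ => exp (-(1/2) * x)) atTop (𝓝 0) := by
      apply Real.tendsto_exp_comp_nhds_zero.mpr
      apply Tendsto.const_mul_atTop_of_neg (by norm_num) tendsto_id
    have h3 := h.isBigO.trans_tendsto h2
    refine h3.congr' ?_
    filter_upwards [eventually_ge_atTop (0:ℝ)] with x hx
    rw [Real.rpow_one]
  have hlimB : Tendsto (fun x : ℝ => x * exp (-b * x ^ 2)) atBot (𝓝 0) := by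
    have := (hlimT.comp tendsto_neg_atBot_atTop).neg
    simp only [Function.comp] at this
    convert this using 2 with x
    · ring_nf
    · simp
  have key := integral_of_hasDerivAt_of_tendsto hd (f' := fun x => x ^ 2 * exp (-b * x ^ 2) - 1 / (2 * b) * exp (-b * x ^ 2)) (hi2.sub (hi0.const_mul _))
    (by simpa using (hlimB.const_mul (-(1 / (2 * b))))) (by simpa using (hlimT.const_mul (-(1 / (2 * b)))))
  rw [integral_sub hi2 (hi0.const_mul _), MeasureTheory.integral_const_mul, integral_gaussian] at key
  linarith [key]

lemma momentnd {n : ℕ} {b : ℝ} (hb : 0 < b) :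
    Integrable (fun v : EuclideanSpace ℝ (Fin n) => ‖v‖ ^ 2 * exp (-b * ‖v‖ ^ 2)) ∧
    ∫ v : EuclideanSpace ℝ (Fin n), ‖v‖ ^ 2 * exp (-b * ‖v‖ ^ 2)
      = (n / (2 * b)) * (π / b) ^ ((n : ℝ) / 2) := by
  set g : Fin n → Fin n → ℝ → ℝ :=
    fun i j t => if j = i then t ^ 2 * exp (-b * t ^ 2) else exp (-b * t ^ 2) with hg
  have hgint : ∀ i j, Integrable (g i j) := by
    intro i j
    by_cases h : j = i
    · simp only [hg, if_pos h]
      have := integrable_rpow_mul_exp_neg_mul_sq hb (s := 2) (by norm_num)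
      simpa [Real.rpow_natCast] using this
    · simp only [hg, if_neg h]
      exact integrable_exp_neg_mul_sq hb
  set F : (Fin n → ℝ) → ℝ := fun x => ∑ i, ∏ j, g i j (x j) with hFdef
  have hF_int : Integrable F := integrable_finset_sum _ (fun i _ => Integrable.fintype_prod (fun j => hgint i j))
  have hFeq : ∀ x : Fin n → ℝ, F x = (∑ i, x i ^ 2) * exp (-b * ∑ i, x i ^ 2) := by
    intro x
    have hexp : exp (-b * ∑ i, x i ^ 2) = ∏ j, exp (-b * x j ^ 2) := by
      rw [← Real.exp_sum]
      congr 1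
      rw [Finset.mul_sum]
    have hterm : ∀ i, ∏ j, g i j (x j) = x i ^ 2 * ∏ j, exp (-b * x j ^ 2) := by
      intro i
      rw [← Finset.prod_erase_mul _ _ (Finset.mem_univ i)]
      have h2 : ∏ j : Fin n, exp (-b * x j ^ 2)
          = (∏ j ∈ Finset.univ.erase i, exp (-b * x j ^ 2)) * exp (-b * x i ^ 2) :=
        (Finset.prod_erase_mul _ _ (Finset.mem_univ i)).symm
      rw [h2]
      have h1 : ∏ j ∈ Finset.univ.erase i, g i j (x j)
          = ∏ j ∈ Finset.univ.erase i, exp (-b * x j ^ 2) :=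
        Finset.prod_congr rfl (fun j hj => by simp [hg, Finset.ne_of_mem_erase hj])
      rw [h1]
      simp only [hg, if_pos rfl]
      ring
    rw [hFdef]
    simp only [hterm, hexp, ← Finset.sum_mul]
  have hFval : ∫ x : Fin n → ℝ, F x = (n / (2 * b)) * (π / b) ^ ((n : ℝ) / 2) := by
    rw [hFdef]; beta_reduce; rw [integral_finset_sum (μ := volume) _ (fun i _ => Integrable.fintype_prod (fun j => hgint i j))]
    have hterm : ∀ i : Fin n, (∫ x : Fin n → ℝ, ∏ j, g i j (x j))
        = 1 / (2 * b) * (π / b) ^ ((n : ℝ) / 2) := by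
      intro i
      rw [MeasureTheory.integral_fintype_prod_volume_eq_prod]
      rw [← Finset.prod_erase_mul _ _ (Finset.mem_univ i)]
      have h1 : ∏ j ∈ Finset.univ.erase i, (∫ t : ℝ, g i j t)
          = Real.sqrt (π / b) ^ (n - 1) := by
        rw [Finset.prod_congr rfl (fun j hj => ?_), Finset.prod_const]
        · congr 1
          rw [Finset.card_erase_of_mem (Finset.mem_univ i), Finset.card_univ, Fintype.card_fin]
        · simp only [hg, if_neg (Finset.ne_of_mem_erase hj)]
          exact integral_gaussian b
      have h2 : (∫ t : ℝ, g i i t) = 1 / (2 * b) * Real.sqrt (π / b) := by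
        simp only [hg, if_pos rfl]
        exact moment1d hb
      rw [h1, h2]
      have hn : 0 < n := i.pos
      have hS : Real.sqrt (π / b) ^ (n - 1) * (1 / (2 * b) * Real.sqrt (π / b))
          = 1 / (2 * b) * Real.sqrt (π / b) ^ n := by
        rw [mul_comm, mul_assoc]
        congr 1
        rw [mul_comm, ← pow_succ, Nat.sub_add_cancel hn]
      rw [hS]
      congr 1
      rw [Real.sqrt_eq_rpow, ← Real.rpow_natCast ((π / b) ^ (1/2 : ℝ)) n,
        ← Real.rpow_mul (by positivity)]
      congr 1
      ring
    simp only [hterm, Finset.sum_const, Finset.card_univ, Fintype.card_fin, nsmul_eq_mul]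
    ring
  have hmp := EuclideanSpace.volume_preserving_symm_measurableEquiv_toLp (Fin n)
  have hcomp : ∀ v : EuclideanSpace ℝ (Fin n),
      ‖v‖ ^ 2 * exp (-b * ‖v‖ ^ 2) = F ((MeasurableEquiv.toLp 2 (Fin n → ℝ)).symm v) := by
    intro v
    have hnorm : ‖v‖ ^ 2 = ∑ i, v i ^ 2 := by
      rw [EuclideanSpace.norm_eq, Real.sq_sqrt (by positivity)]
      simp [Real.norm_eq_abs, sq_abs]
    have happ : ∀ j, ((MeasurableEquiv.toLp 2 (Fin n → ℝ)).symm v) j = v j := fun j => rfl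
    rw [hFeq]
    simp only [happ, hnorm]
  constructor
  · have := (hmp.integrable_comp_emb ((MeasurableEquiv.toLp 2 (Fin n → ℝ)).symm).measurableEmbedding).mpr hF_int
    refine this.congr ?_
    filter_upwards with v
    exact (hcomp v).symm
  · calc ∫ v : EuclideanSpace ℝ (Fin n), ‖v‖ ^ 2 * exp (-b * ‖v‖ ^ 2)
        = ∫ v : EuclideanSpace ℝ (Fin n), F ((MeasurableEquiv.toLp 2 (Fin n → ℝ)).symm v) := by
          congr 1; ext v; exact hcomp v
      _ = ∫ x : Fin n → ℝ, F x := hmp.integral_comp' F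
      _ = _ := hFval


lemma pointwise_bound {n : ℕ} {μc : ℝ} (hμc : 0 < μc) {p : EuclideanSpace ℝ (Fin n) → ℝ}
    (hp : ∀ x, 0 ≤ p x) (hcont : Continuous (fun x => -Real.log (p x)))
    (hconv : StrongConvexOn Set.univ μc (fun x => -Real.log (p x)))
    {xs : EuclideanSpace ℝ (Fin n)} (hmode : ∀ x, p x ≤ p xs) (hpxs : 0 < p xs) :
    ∀ x, p x ≤ p xs * exp (-(μc / 2) * ‖x - xs‖ ^ 2) := by
  set f : EuclideanSpace ℝ (Fin n) → ℝ := fun x => -Real.log (p x) with hf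
  have hmin : ∀ y, f xs ≤ f y := by
    intro y
    rcases (hp y).lt_or_eq with hpos | h0
    · exact neg_le_neg (Real.log_le_log hpos (hmode y))
    · have hfy : f y = 0 := by simp [hf, ← h0]
      by_contra hcon
      push_neg at hcon
      rw [hfy] at hcon
      obtain ⟨δ, hδ, hball⟩ : ∃ δ > 0, ∀ w, dist w y < δ → f w < f xs := by
        have hc : ContinuousAt f y := hcont.continuousAt
        rw [Metric.continuousAt_iff] at hc
        obtain ⟨δ, hδ, hd⟩ := hc (f xs) hcon
        refine ⟨δ, hδ, fun w hw => ?_⟩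
        have := hd hw
        rw [hfy, Real.dist_eq, sub_zero] at this
        exact lt_of_le_of_lt (le_abs_self _) this
      have hzero : ∀ w, dist w y < δ → p w = 0 := by
        intro w hw
        by_contra hne
        have hpw : 0 < p w := (hp w).lt_of_ne (Ne.symm hne)
        exact absurd (hball w hw) (not_lt.mpr (neg_le_neg (Real.log_le_log hpw (hmode w))))
      rcases Nat.eq_zero_or_pos n with hn | hn
      · subst hn
        have hyx : y = xs := PiLp.ext fun i => i.elim0
        rw [← hyx, ← h0] at hpxs
        exact lt_irrefl _ hpxs
      · set v : EuclideanSpace ℝ (Fin n) := EuclideanSpace.single ⟨0, hn⟩ (δ / 2) with hv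
        have hnv : ‖v‖ = δ / 2 := by
          rw [hv, EuclideanSpace.norm_single]
          exact abs_of_pos (by positivity)
        set w : EuclideanSpace ℝ (Fin n) := y + v with hwdef
        have hwy : dist w y < δ := by
          rw [dist_eq_norm, hwdef, add_sub_cancel_left, hnv]; linarith
        have hfw : f w = 0 := by simp [hf, hzero w hwy]
        have hmd : dist ((1/2 : ℝ) • y + (1/2 : ℝ) • w) y < δ := by
          have : (1/2 : ℝ) • y + (1/2 : ℝ) • w - y = (1/2 : ℝ) • v := by
            rw [hwdef]; module
          rw [dist_eq_norm, this, norm_smul, hnv, Real.norm_eq_abs,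
            abs_of_pos (by norm_num : (0:ℝ) < 1/2)]
          linarith
        have hfm : f ((1/2 : ℝ) • y + (1/2 : ℝ) • w) = 0 := by
          show -Real.log (p ((1/2 : ℝ) • y + (1/2 : ℝ) • w)) = 0
          rw [hzero _ hmd, Real.log_zero, neg_zero]
        have hyw : ‖y - w‖ = δ / 2 := by
          rw [hwdef]
          have : y - (y + v) = -v := by module
          rw [this, norm_neg, hnv]
        have hcx := hconv.2 (mem_univ y) (mem_univ w)
          (show (0:ℝ) ≤ 1/2 by norm_num) (show (0:ℝ) ≤ 1/2 by norm_num)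
          (show (1/2 : ℝ) + 1/2 = 1 by norm_num)
        rw [hfm, hfw, hfy, hyw] at hcx
        simp only [smul_eq_mul] at hcx
        nlinarith [hcx, mul_pos (half_pos hμc) (pow_pos (half_pos hδ) 2)]
  intro x
  rcases (hp x).lt_or_eq with hpos | h0
  · have hC : ∀ t ∈ Ioo (0:ℝ) 1, f xs + (1 - t) * (μc / 2 * ‖x - xs‖ ^ 2) ≤ f x := by
      intro t ht
      have h := hconv.2 (mem_univ x) (mem_univ xs)
        (show 0 ≤ t from ht.1.le) (show 0 ≤ 1 - t by linarith [ht.2])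
        (show t + (1 - t) = 1 by ring)
      have hge := hmin (t • x + (1 - t) • xs)
      simp only [smul_eq_mul] at h
      nlinarith [hge.trans h, ht.1, ht.2]
    have hkey : f xs + μc / 2 * ‖x - xs‖ ^ 2 ≤ f x := by
      have hlim : Tendsto (fun t : ℝ => f xs + (1 - t) * (μc / 2 * ‖x - xs‖ ^ 2)) (𝓝[>] 0)
          (𝓝 (f xs + (1 - 0) * (μc / 2 * ‖x - xs‖ ^ 2))) :=
        ((continuous_const.add ((continuous_const.sub continuous_id).mul
          continuous_const)).tendsto 0).mono_left nhdsWithin_le_nhds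
      have hev : ∀ᶠ t in 𝓝[>] (0:ℝ), f xs + (1 - t) * (μc / 2 * ‖x - xs‖ ^ 2) ≤ f x := by
        filter_upwards [Ioo_mem_nhdsGT_of_mem (Set.mem_Ico.mpr ⟨le_refl (0:ℝ), one_pos⟩)]
          with t ht using hC t ht
      have := le_of_tendsto hlim hev
      simpa using this
    have hlog : Real.log (p x) ≤ Real.log (p xs) + -(μc / 2) * ‖x - xs‖ ^ 2 := by
      simp only [hf] at hkey; linarith
    calc p x = exp (Real.log (p x)) := (Real.exp_log hpos).symm
      _ ≤ exp (Real.log (p xs) + -(μc / 2) * ‖x - xs‖ ^ 2) := Real.exp_le_exp.mpr hlog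
      _ = p xs * exp (-(μc / 2) * ‖x - xs‖ ^ 2) := by rw [Real.exp_add, Real.exp_log hpxs]
  · rw [← h0]
    positivity

lemma w2_part {n : ℕ} {p : EuclideanSpace ℝ (Fin n) → ℝ} (hp : ∀ x, 0 ≤ p x)
    (hp_int : Integrable p) (hint : ∫ x, p x = 1) (xs : EuclideanSpace ℝ (Fin n)) :
    (W2 (Measure.dirac xs) (volume.withDensity fun x => ENNReal.ofReal (p x))) ^ 2
      = ∫ x, ‖x - xs‖ ^ 2 * p x := by
  set ν : Measure (EuclideanSpace ℝ (Fin n)) :=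
    volume.withDensity fun x => ENNReal.ofReal (p x) with hν
  have hprob : IsProbabilityMeasure ν := by
    constructor
    rw [hν, withDensity_apply _ MeasurableSet.univ, setLIntegral_univ,
      ← ofReal_integral_eq_lintegral_ofReal hp_int (ae_of_all _ hp), hint, ENNReal.ofReal_one]
  set V : ℝ := ∫ x, ‖x - xs‖ ^ 2 * p x with hV
  have hνint : ∫ y, ‖xs - y‖ ^ 2 ∂ν = V := by
    have hcoe : (fun x => ENNReal.ofReal (p x))
        = fun x => ((Real.toNNReal (p x) : ℝ≥0) : ℝ≥0∞) := rfl
    rw [hν, hcoe, integral_withDensity_eq_integral_smul₀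
      (hp_int.aemeasurable.real_toNNReal) (fun y => ‖xs - y‖ ^ 2)]
    rw [hV]
    congr 1
    ext y
    rw [NNReal.smul_def, smul_eq_mul, Real.coe_toNNReal _ (hp y), norm_sub_rev]
    ring
  have helper : ∀ pl : Measure (EuclideanSpace ℝ (Fin n) × EuclideanSpace ℝ (Fin n)),
      IsProbabilityMeasure pl → pl.map Prod.fst = Measure.dirac xs → pl.map Prod.snd = ν →
      ∫ q, ‖q.1 - q.2‖ ^ 2 ∂pl = V := by
    intro pl hpl h1 h2
    have hms : MeasurableSet {y : EuclideanSpace ℝ (Fin n) | y ≠ xs} :=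
      (measurableSet_singleton xs).compl
    have hae : ∀ᵐ q ∂pl, q.1 = xs := by
      rw [ae_iff]
      have : {q : EuclideanSpace ℝ (Fin n) × EuclideanSpace ℝ (Fin n) | ¬ q.1 = xs}
          = Prod.fst ⁻¹' {y | y ≠ xs} := rfl
      rw [this, ← Measure.map_apply measurable_fst hms, h1, Measure.dirac_apply' _ hms]
      simp
    calc ∫ q, ‖q.1 - q.2‖ ^ 2 ∂pl = ∫ q, ‖xs - q.2‖ ^ 2 ∂pl := by
          refine integral_congr_ae ?_
          filter_upwards [hae] with q hq
          rw [hq]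
      _ = ∫ y, ‖xs - y‖ ^ 2 ∂(pl.map Prod.snd) :=
          (integral_map measurable_snd.aemeasurable
            ((continuous_const.sub continuous_id).norm.pow 2).aestronglyMeasurable).symm
      _ = V := by rw [h2]; exact hνint
  have hS : {c : ℝ | ∃ pl : Measure (EuclideanSpace ℝ (Fin n) × EuclideanSpace ℝ (Fin n)),
      IsProbabilityMeasure pl ∧ pl.map Prod.fst = Measure.dirac xs ∧ pl.map Prod.snd = ν ∧
      c = ∫ q, ‖q.1 - q.2‖ ^ 2 ∂pl} = {V} := by
    ext c
    simp only [mem_setOf_eq, mem_singleton_iff]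
    constructor
    · rintro ⟨pl, hpl, h1, h2, rfl⟩
      exact helper pl hpl h1 h2
    · rintro rfl
      refine ⟨(Measure.dirac xs).prod ν, by infer_instance, ?_, ?_, ?_⟩
      · rw [Measure.map_fst_prod]
        simp
      · rw [Measure.map_snd_prod]
        simp
      · exact (helper _ (by infer_instance) (by rw [Measure.map_fst_prod]; simp)
          (by rw [Measure.map_snd_prod]; simp)).symm
  have hV0 : 0 ≤ V := integral_nonneg fun x => mul_nonneg (by positivity) (hp x)
  unfold W2 W2sq
  rw [hS, csInf_singleton, Real.sq_sqrt hV0]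

/-- For a `μc`-strongly log-concave probability density `p` on `ℝⁿ` with finite second moment
and mode `xs`, if `(sup p)·(2π/μc)^{n/2} ≤ 1`, then
`W₂(δ_{xs}, p)² = ∫ ‖x − xs‖² p(x) dx ≤ 2n/μc`. -/
theorem W2_dirac_mode_sq_le_of_stronglyLogConcave {n : ℕ} (μc : ℝ) (hμc : 0 < μc)
    (p : EuclideanSpace ℝ (Fin n) → ℝ) (hp : ∀ x, 0 ≤ p x)
    (hint : ∫ x, p x = 1)
    (hlc : StronglyLogConcave μc p)
    (hmom : Integrable (fun x => ‖x‖ ^ 2 * p x))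
    (xs : EuclideanSpace ℝ (Fin n)) (hmode : ∀ x, p x ≤ p xs)
    (hsup : (⨆ x, p x) * (2 * π / μc) ^ ((n : ℝ) / 2) ≤ 1) :
    (W2 (Measure.dirac xs) (volume.withDensity (fun x => ENNReal.ofReal (p x)))) ^ 2 =
        ∫ x, ‖x - xs‖ ^ 2 * p x ∧
      ∫ x, ‖x - xs‖ ^ 2 * p x ≤ 2 * n / μc := by
  have hp_int : Integrable p := by
    by_contra h
    rw [MeasureTheory.integral_undef h] at hint
    exact one_ne_zero hint.symm
  have hpxs : 0 < p xs := by
    rcases (hp xs).lt_or_eq with h | h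
    · exact h
    · exfalso
      have hz : ∀ x, p x = 0 := fun x => le_antisymm (le_of_le_of_eq (hmode x) h.symm) (hp x)
      have : ∫ x, p x = 0 := by simp [hz]
      rw [hint] at this
      exact one_ne_zero this
  refine ⟨w2_part hp hp_int hint xs, ?_⟩
  -- Part 2
  have hb : (0 : ℝ) < μc / 2 := half_pos hμc
  obtain ⟨hInt2, hVal⟩ := momentnd (n := n) hb
  have hptw := pointwise_bound hμc hp hlc.1.continuous hlc.2 hmode hpxs
  have hsup_eq : (⨆ x, p x) = p xs := by
    have hbdd : BddAbove (Set.range p) := ⟨p xs, by rintro _ ⟨x, rfl⟩; exact hmode x⟩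
    exact le_antisymm (ciSup_le hmode) (le_ciSup hbdd xs)
  have hp1 : p xs * (2 * π / μc) ^ ((n : ℝ) / 2) ≤ 1 := by rwa [hsup_eq] at hsup
  have g_meas : AEStronglyMeasurable (fun x : EuclideanSpace ℝ (Fin n) => ‖x - xs‖ ^ 2 * p x)
      volume :=
    (((continuous_id.sub continuous_const).norm.pow 2).aestronglyMeasurable).mul
      hp_int.aestronglyMeasurable
  have g_int : Integrable (fun x : EuclideanSpace ℝ (Fin n) => ‖x - xs‖ ^ 2 * p x) := by
    refine Integrable.mono' ((hmom.const_mul 2).add (hp_int.const_mul (2 * ‖xs‖ ^ 2))) g_meas ?_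
    filter_upwards with x
    rw [Real.norm_eq_abs, abs_of_nonneg (mul_nonneg (by positivity) (hp x))]
    have h1 : ‖x - xs‖ ^ 2 ≤ 2 * ‖x‖ ^ 2 + 2 * ‖xs‖ ^ 2 := by
      nlinarith [mul_self_le_mul_self (norm_nonneg (x - xs)) (norm_sub_le x xs),
        sq_nonneg (‖x‖ - ‖xs‖)]
    have h2 := mul_le_mul_of_nonneg_right h1 (hp x)
    show ‖x - xs‖ ^ 2 * p x ≤ 2 * (‖x‖ ^ 2 * p x) + 2 * ‖xs‖ ^ 2 * p x
    calc ‖x - xs‖ ^ 2 * p x ≤ (2 * ‖x‖ ^ 2 + 2 * ‖xs‖ ^ 2) * p x := h2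
      _ = 2 * (‖x‖ ^ 2 * p x) + 2 * ‖xs‖ ^ 2 * p x := by ring
  have rhs_int : Integrable (fun x : EuclideanSpace ℝ (Fin n) =>
      p xs * (‖x - xs‖ ^ 2 * exp (-(μc / 2) * ‖x - xs‖ ^ 2))) :=
    (hInt2.comp_sub_right xs).const_mul _
  have hmono : ∫ x, ‖x - xs‖ ^ 2 * p x ≤
      ∫ x, p xs * (‖x - xs‖ ^ 2 * exp (-(μc / 2) * ‖x - xs‖ ^ 2)) := by
    refine integral_mono g_int rhs_int fun x => ?_
    calc ‖x - xs‖ ^ 2 * p x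
        ≤ ‖x - xs‖ ^ 2 * (p xs * exp (-(μc / 2) * ‖x - xs‖ ^ 2)) :=
          mul_le_mul_of_nonneg_left (hptw x) (by positivity)
      _ = p xs * (‖x - xs‖ ^ 2 * exp (-(μc / 2) * ‖x - xs‖ ^ 2)) := by ring
  have htrans : ∫ x, p xs * (‖x - xs‖ ^ 2 * exp (-(μc / 2) * ‖x - xs‖ ^ 2))
      = p xs * ((n / μc) * (2 * π / μc) ^ ((n : ℝ) / 2)) := by
    rw [MeasureTheory.integral_const_mul]
    congr 1
    rw [integral_sub_right_eq_self
      (fun v : EuclideanSpace ℝ (Fin n) => ‖v‖ ^ 2 * exp (-(μc / 2) * ‖v‖ ^ 2)) xs, hVal]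
    have h1 : π / (μc / 2) = 2 * π / μc := by
      rw [div_div_eq_mul_div, mul_comm]
    have h2 : (n : ℝ) / (2 * (μc / 2)) = n / μc := by
      congr 1
      field_simp
    rw [h1, h2]
  have hnn : (0 : ℝ) ≤ (n : ℝ) / μc := div_nonneg (Nat.cast_nonneg n) hμc.le
  calc ∫ x, ‖x - xs‖ ^ 2 * p x
      ≤ p xs * ((n / μc) * (2 * π / μc) ^ ((n : ℝ) / 2)) := hmono.trans_eq htrans
    _ = (n / μc) * (p xs * (2 * π / μc) ^ ((n : ℝ) / 2)) := by ring
    _ ≤ (n / μc) * 1 := mul_le_mul_of_nonneg_left hp1 hnn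
    _ ≤ 2 * n / μc := by
        rw [mul_one]
        rw [div_le_div_iff_of_pos_right hμc] at *
        · linarith [Nat.cast_nonneg (α := ℝ) n]
end

section
/- (Analytic core of Lemma B.4, Grönwall form.) Let ᾱ: [0, T] → (0, 1] be continuously differentiable with ᾱ(0) = 1, and define f(t) = d/dt log √(ᾱ(t)) and g²(t) = d/dt(1 − ᾱ(t)) − 2 f(t)(1 − ᾱ(t)), assumed nonnegative. Let L ∈ ℝ, let Δ: [0, T] → [0, ∞) be continuous, fix t₀ ∈ (0, T], and let W: [0, t₀] → [0, ∞) be differentiable and satisfy −W'(t) ≤ (f(t) + L·g²(t))·W(t) + g²(t)·Δ(t) for all t ∈ [0, t₀]. Then W(0) ≤ ᾱ(t₀)^{1/2 − L}·W(t₀) + ∫₀^{t₀} g²(r)·ᾱ(r)^{1/2 − L}·Δ(r) dr. -/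
open MeasureTheory Set Real intervalIntegral

/-- **Analytic core of Lemma B.4 (Grönwall form).**
Let `α : [0, T] → (0, 1]` be continuously differentiable with `α 0 = 1`, let
`f t = d/dt log √(α t)` and `g2 t = d/dt (1 − α t) − 2 f t (1 − α t)` be nonnegative,
let `Δ ≥ 0` be continuous, and let `W ≥ 0` be differentiable with
`−W' t ≤ (f t + L·g2 t)·W t + g2 t·Δ t` on `[0, t₀]`.  Then
`W 0 ≤ α t₀ ^ (1/2 − L) · W t₀ + ∫₀^{t₀} g2 r · α r ^ (1/2 − L) · Δ r dr`. -/
theorem gronwall_lemma_B4 (T : ℝ) (hT : 0 < T) (α α' : ℝ → ℝ)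
    (hα : ∀ t ∈ Icc (0 : ℝ) T, HasDerivAt α (α' t) t)
    (hα' : ContinuousOn α' (Icc (0 : ℝ) T))
    (hrange : ∀ t ∈ Icc (0 : ℝ) T, α t ∈ Ioc (0 : ℝ) 1) (h0 : α 0 = 1)
    (f g2 : ℝ → ℝ)
    (hf : ∀ t ∈ Icc (0 : ℝ) T, f t = deriv (fun s => Real.log (Real.sqrt (α s))) t)
    (hg2 : ∀ t ∈ Icc (0 : ℝ) T,
      g2 t = deriv (fun s => 1 - α s) t - 2 * f t * (1 - α t))
    (hg2nn : ∀ t ∈ Icc (0 : ℝ) T, 0 ≤ g2 t)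
    (L : ℝ) (Δ : ℝ → ℝ)
    (hΔ : ContinuousOn Δ (Icc (0 : ℝ) T)) (hΔnn : ∀ t ∈ Icc (0 : ℝ) T, 0 ≤ Δ t)
    (t₀ : ℝ) (ht₀ : t₀ ∈ Ioc (0 : ℝ) T)
    (W W' : ℝ → ℝ) (hW : ∀ t ∈ Icc (0 : ℝ) t₀, HasDerivAt W (W' t) t)
    (hWnn : ∀ t ∈ Icc (0 : ℝ) t₀, 0 ≤ W t)
    (hineq : ∀ t ∈ Icc (0 : ℝ) t₀,
      -W' t ≤ (f t + L * g2 t) * W t + g2 t * Δ t) :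
    W 0 ≤ α t₀ ^ ((1 : ℝ) / 2 - L) * W t₀ +
      ∫ r in (0 : ℝ)..t₀, g2 r * α r ^ ((1 : ℝ) / 2 - L) * Δ r := by
  obtain ⟨ht₀pos, ht₀T⟩ := ht₀
  set p : ℝ := (1 : ℝ) / 2 - L with hp
  have hsub : Icc (0 : ℝ) t₀ ⊆ Icc 0 T := Icc_subset_Icc le_rfl ht₀T
  have hαpos : ∀ t ∈ Icc (0 : ℝ) T, 0 < α t := fun t ht => (hrange t ht).1
  -- `f t = α' t / (2 * α t)`
  have hft : ∀ t ∈ Icc (0 : ℝ) T, f t = α' t / (2 * α t) := by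
    intro t ht
    have ha := hαpos t ht
    have hs : Real.sqrt (α t) ≠ 0 := by positivity
    have hd2 : HasDerivAt (fun s => Real.log (Real.sqrt (α s)))
        ((α' t / (2 * Real.sqrt (α t))) / Real.sqrt (α t)) t :=
      ((hα t ht).sqrt ha.ne').log hs
    rw [hf t ht, hd2.deriv]
    have hsq : Real.sqrt (α t) * Real.sqrt (α t) = α t := Real.mul_self_sqrt ha.le
    rw [div_div, mul_assoc, hsq]
  -- `α' t = 2 * f t * α t`
  have hα'f : ∀ t ∈ Icc (0 : ℝ) T, α' t = 2 * f t * α t := by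
    intro t ht
    have ha := (hαpos t ht).ne'
    rw [hft t ht]
    field_simp
  -- `g2 t = -2 * f t`
  have hg2f : ∀ t ∈ Icc (0 : ℝ) T, g2 t = -2 * f t := by
    intro t ht
    have hd : HasDerivAt (fun s => (1 : ℝ) - α s) (-α' t) t := (hα t ht).const_sub 1
    rw [hg2 t ht, hd.deriv, hα'f t ht]
    ring
  -- continuity facts
  have hαc : ContinuousOn α (Icc (0 : ℝ) T) := fun t ht =>
    (hα t ht).continuousAt.continuousWithinAt
  have hfc : ContinuousOn f (Icc (0 : ℝ) T) := by
    refine ContinuousOn.congr ?_ hft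
    exact hα'.div (continuousOn_const.mul hαc)
      (fun t ht => by have := hαpos t ht; positivity)
  have hg2c : ContinuousOn g2 (Icc (0 : ℝ) T) := by
    refine ContinuousOn.congr ?_ hg2f
    exact continuousOn_const.mul hfc
  have hαpc : ContinuousOn (fun r => α r ^ p) (Icc (0 : ℝ) T) :=
    hαc.rpow_const fun t ht => Or.inl (hαpos t ht).ne'
  set φ : ℝ → ℝ := fun r => g2 r * α r ^ p * Δ r with hφ
  have hφc : ContinuousOn φ (Icc (0 : ℝ) T) := (hg2c.mul hαpc).mul hΔ
  have hφint : ∀ t ∈ Icc (0 : ℝ) t₀, IntervalIntegrable φ volume 0 t := by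
    intro t ht
    refine (hφc.mono ?_).intervalIntegrable
    rw [uIcc_of_le ht.1]
    exact (Icc_subset_Icc le_rfl ht.2).trans hsub
  set G : ℝ → ℝ := fun t => ∫ r in (0 : ℝ)..t, φ r with hG
  have hGc : ContinuousOn G (Icc (0 : ℝ) t₀) := by
    have := continuousOn_primitive_interval (f := φ) (μ := volume) (a := (0:ℝ)) (b := t₀) ?_
    · rwa [uIcc_of_le ht₀pos.le] at this
    · rw [uIcc_of_le ht₀pos.le]
      exact (hφc.mono hsub).integrableOn_compact isCompact_Icc
  -- φ is continuous (and strongly measurable) at interior points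
  have hφIoo : ContinuousOn φ (Ioo (0 : ℝ) T) := hφc.mono Ioo_subset_Icc_self
  have hGd : ∀ t ∈ Ioo (0 : ℝ) t₀, HasDerivAt G (φ t) t := by
    intro t ht
    have htT : t ∈ Ioo (0 : ℝ) T := ⟨ht.1, lt_of_lt_of_le ht.2 ht₀T⟩
    exact integral_hasDerivAt_right (hφint t ⟨ht.1.le, ht.2.le⟩)
      (hφIoo.stronglyMeasurableAtFilter isOpen_Ioo t htT)
      (hφIoo.continuousAt (isOpen_Ioo.mem_nhds htT))
  set h : ℝ → ℝ := fun t => α t ^ p * W t + G t with hh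
  have hWc : ContinuousOn W (Icc (0 : ℝ) t₀) := fun t ht =>
    (hW t ht).continuousAt.continuousWithinAt
  have hhc : ContinuousOn h (Icc (0 : ℝ) t₀) := ((hαpc.mono hsub).mul hWc).add hGc
  have hhd : ∀ t ∈ Ioo (0 : ℝ) t₀, HasDerivAt h
      (α' t * p * α t ^ (p - 1) * W t + α t ^ p * W' t + φ t) t := by
    intro t ht
    have htI : t ∈ Icc (0 : ℝ) t₀ := Ioo_subset_Icc_self ht
    have htT : t ∈ Icc (0 : ℝ) T := hsub htI
    exact (((hα t htT).rpow_const (Or.inl (hαpos t htT).ne')).mul (hW t htI)).add (hGd t ht)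
  have hmono : MonotoneOn h (Icc (0 : ℝ) t₀) := by
    refine monotoneOn_of_deriv_nonneg (convex_Icc 0 t₀) hhc ?_ ?_
    · intro t ht
      rw [interior_Icc] at ht
      exact (hhd t ht).differentiableAt.differentiableWithinAt
    · intro t ht
      rw [interior_Icc] at ht
      rw [(hhd t ht).deriv]
      have htI : t ∈ Icc (0 : ℝ) t₀ := Ioo_subset_Icc_self ht
      have htT : t ∈ Icc (0 : ℝ) T := hsub htI
      have ha := hαpos t htT
      have hap : (0 : ℝ) < α t ^ p := Real.rpow_pos_of_pos ha p
      have hpw : α t ^ (p - 1) * α t = α t ^ p := by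
        rw [← Real.rpow_add_one ha.ne', sub_add_cancel]
      have h1 := hineq t htI
      rw [hg2f t htT] at h1
      have hinner : 0 ≤ 2 * p * f t * W t + W' t - 2 * f t * Δ t := by
        rw [hp]
        nlinarith [h1]
      have hrw : α' t * p * α t ^ (p - 1) * W t + α t ^ p * W' t + φ t
          = α t ^ p * (2 * p * f t * W t + W' t - 2 * f t * Δ t) := by
        simp only [hφ]
        rw [hα'f t htT, hg2f t htT, ← hpw]
        ring
      rw [hrw]
      exact mul_nonneg hap.le hinner
  have key : h 0 ≤ h t₀ :=
    hmono ⟨le_rfl, ht₀pos.le⟩ ⟨ht₀pos.le, le_rfl⟩ ht₀pos.le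
  have h0' : h 0 = W 0 := by
    simp only [hh, hG, h0, Real.one_rpow, intervalIntegral.integral_same, one_mul, add_zero]
  rw [h0'] at key
  exact key
end
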